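/- For any k ≥ 2, every local k-type Swap Schelling Game played on a tree admits a swap equilibrium: there exists a strategy profile in which no two adjacent agents of different colors can both strictly increase their utilities by exchanging vertices. -/

import Mathlib

open SimpleGraph Finset
open scoped Classical

noncomputable def ssgUtil {V A : Type*} [Fintype V] [DecidableEq V]
    (G : SimpleGraph V) [DecidableRel G.Adj]
    {k : ℕ} (c : A → Fin k) (σ : A ≃ V) (i : A) : ℚ :=
  (((G.neighborFinset (σ i)).filter (fun v => c (σ.symm v) = c i)).card : ℚ) /
    (G.degree (σ i) : ℚ)

def ssgSwap {V A : Type*} [DecidableEq V] (σ : A ≃ V) (i j : A) : A ≃ V :=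
  σ.trans (Equiv.swap (σ i) (σ j))

def ssgProfitable {V A : Type*} [Fintype V] [DecidableEq V]
    (G : SimpleGraph V) [DecidableRel G.Adj]
    {k : ℕ} (c : A → Fin k) (σ : A ≃ V) (i j : A) : Prop :=
  c i ≠ c j ∧
    ssgUtil G c σ i < ssgUtil G c (ssgSwap σ i j) i ∧
    ssgUtil G c σ j < ssgUtil G c (ssgSwap σ i j) j

def ssgEquilibrium {V A : Type*} [Fintype V] [DecidableEq V]
    (G : SimpleGraph V) [DecidableRel G.Adj]
    {k : ℕ} (c : A → Fin k) (σ : A ≃ V) : Prop :=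
  ∀ i j : A, ¬ ssgProfitable G c σ i j

def ssgLocalEquilibrium {V A : Type*} [Fintype V] [DecidableEq V]
    (G : SimpleGraph V) [DecidableRel G.Adj]
    {k : ℕ} (c : A → Fin k) (σ : A ≃ V) : Prop :=
  ∀ i j : A, G.Adj (σ i) (σ j) → ¬ ssgProfitable G c σ i j

noncomputable def ssgWelfare {V A : Type*} [Fintype V] [DecidableEq V] [Fintype A]
    (G : SimpleGraph V) [DecidableRel G.Adj]
    {k : ℕ} (c : A → Fin k) (σ : A ≃ V) : ℚ :=
  ∑ i : A, ssgUtil G c σ i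

noncomputable def ssgPhi {V A : Type*} [Fintype V] [DecidableEq V]
    (G : SimpleGraph V) [DecidableRel G.Adj]
    {k : ℕ} (c : A → Fin k) (σ : A ≃ V) : ℕ :=
  (G.edgeFinset.filter (fun e => ∀ u ∈ e, ∀ v ∈ e, c (σ.symm u) = c (σ.symm v))).card


section TreeAux
variable {V : Type*} {G : SimpleGraph V}

lemma aux_not_mem_support {r w v : V} (q : G.Walk r w) (hq : q.length = G.dist r w)
    (hvw : v ≠ w) (hle : G.dist r w ≤ G.dist r v) : v ∉ q.support := by
  intro hm
  have h1 : G.dist r v ≤ (q.takeUntil v hm).length := SimpleGraph.dist_le _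
  have h2 := SimpleGraph.Walk.take_spec q hm
  have h3 : (q.takeUntil v hm).length + (q.dropUntil v hm).length = q.length := by
    rw [← SimpleGraph.Walk.length_append, h2]
  have h4 : (q.dropUntil v hm).length ≠ 0 := by
    intro h0
    exact hvw (SimpleGraph.Walk.eq_of_length_eq_zero h0)
  omega

lemma aux_dist_ne {r v w : V} (ht : G.IsTree) (hadj : G.Adj w v) :
    G.dist r w ≠ G.dist r v := by
  intro hd
  obtain ⟨q, hqp, hql⟩ := (ht.isConnected r w).exists_path_of_dist
  have hv : v ∉ q.support := aux_not_mem_support q hql hadj.ne' (le_of_eq hd)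
  obtain ⟨p, hpp, hpl⟩ := (ht.isConnected r v).exists_path_of_dist
  have hp2 : (SimpleGraph.Walk.cons hadj.symm q.reverse).IsPath := by
    apply SimpleGraph.Walk.IsPath.cons hqp.reverse
    rwa [SimpleGraph.Walk.support_reverse, List.mem_reverse]
  have := ht.IsAcyclic.path_unique ⟨SimpleGraph.Walk.cons hadj.symm q.reverse, hp2⟩
    ⟨p.reverse, hpp.reverse⟩
  have hlen := congrArg SimpleGraph.Walk.length (congrArg Subtype.val this)
  simp only [SimpleGraph.Walk.length_cons, SimpleGraph.Walk.length_reverse] at hlen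
  omega

lemma aux_parent_unique {r v w1 w2 : V} (ht : G.IsTree)
    (h1 : G.Adj v w1) (h2 : G.Adj v w2)
    (hd1 : G.dist r w1 < G.dist r v) (hd2 : G.dist r w2 < G.dist r v) : w1 = w2 := by
  obtain ⟨q1, hq1p, hq1l⟩ := (ht.isConnected r w1).exists_path_of_dist
  obtain ⟨q2, hq2p, hq2l⟩ := (ht.isConnected r w2).exists_path_of_dist
  have hv1 : v ∉ q1.support := aux_not_mem_support q1 hq1l h1.ne (le_of_lt hd1)
  have hv2 : v ∉ q2.support := aux_not_mem_support q2 hq2l h2.ne (le_of_lt hd2)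
  have hp1 : (SimpleGraph.Walk.cons h1 q1.reverse).IsPath := by
    apply SimpleGraph.Walk.IsPath.cons hq1p.reverse
    rwa [SimpleGraph.Walk.support_reverse, List.mem_reverse]
  have hp2 : (SimpleGraph.Walk.cons h2 q2.reverse).IsPath := by
    apply SimpleGraph.Walk.IsPath.cons hq2p.reverse
    rwa [SimpleGraph.Walk.support_reverse, List.mem_reverse]
  have heq := ht.IsAcyclic.path_unique ⟨SimpleGraph.Walk.cons h1 q1.reverse, hp1⟩
    ⟨SimpleGraph.Walk.cons h2 q2.reverse, hp2⟩
  have := congrArg (fun p => SimpleGraph.Walk.getVert p 1) (congrArg Subtype.val heq)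
  simpa [SimpleGraph.Walk.getVert_cons_succ] using this

end TreeAux

lemma aux_nat_le {n d1 d2 a b : ℕ} (ha : a < n) (h : n * d1 + a ≤ n * d2 + b) (hb : b < n) :
    d1 ≤ d2 := by
  by_contra h'
  have : n * (d2 + 1) ≤ n * d1 := Nat.mul_le_mul_left n (by omega)
  rw [Nat.mul_add, Nat.mul_one] at this
  omega

lemma aux_nat_eq {n d1 d2 a b : ℕ} (ha : a < n) (h : n * d1 + a = n * d2 + b) (hb : b < n) :
    d1 = d2 ∧ a = b := by
  have h1 : d1 ≤ d2 := aux_nat_le ha (by omega) hb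
  have h2 : d2 ≤ d1 := aux_nat_le hb (by omega) ha
  have : d1 = d2 := le_antisymm h1 h2
  subst this
  omega

lemma aux_util_nonneg {V A : Type*} [Fintype V] [DecidableEq V]
    (G : SimpleGraph V) [DecidableRel G.Adj]
    {k : ℕ} (c : A → Fin k) (σ : A ≃ V) (i : A) : 0 ≤ ssgUtil G c σ i := by
  unfold ssgUtil
  positivity

lemma aux_no_improve {V A : Type*} [Fintype V] [DecidableEq V]
    (G : SimpleGraph V) [DecidableRel G.Adj]
    {k : ℕ} (c : A → Fin k) (σ : A ≃ V) (key : V → ℕ)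
    (hkeyinj : Function.Injective key)
    (huniq : ∀ v w1 w2, G.Adj v w1 → G.Adj v w2 → key w1 < key v → key w2 < key v → w1 = w2)
    (hmono : ∀ a b, key (σ a) < key (σ b) → c a ≤ c b)
    (i j : A) (hadj : G.Adj (σ i) (σ j)) (hne : c i ≠ c j)
    (hlt : key (σ i) < key (σ j)) :
    ssgUtil G c (ssgSwap σ i j) i = 0 := by
  have hpt : (ssgSwap σ i j) i = σ j := by
    simp [ssgSwap, Equiv.trans_apply, Equiv.swap_apply_left]
  have hempty : ((G.neighborFinset ((ssgSwap σ i j) i)).filter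
      (fun v => c ((ssgSwap σ i j).symm v) = c i)) = ∅ := by
    rw [Finset.filter_eq_empty_iff]
    intro w hw
    rw [hpt, SimpleGraph.mem_neighborFinset] at hw
    have hsymm : ∀ x, (ssgSwap σ i j).symm x = σ.symm (Equiv.swap (σ i) (σ j) x) := by
      intro x
      simp [ssgSwap, Equiv.symm_trans_apply, Equiv.symm_swap]
    by_cases hwi : w = σ i
    · subst hwi
      rw [hsymm, Equiv.swap_apply_left, Equiv.symm_apply_apply]
      exact fun h => hne h.symm
    · have hwj : w ≠ σ j := hw.ne'
      rw [hsymm, Equiv.swap_apply_of_ne_of_ne hwi hwj]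
      have hkw : key (σ j) < key w := by
        rcases lt_trichotomy (key w) (key (σ j)) with h | h | h
        · exact absurd (huniq (σ j) w (σ i) hw hadj.symm h hlt) hwi
        · exact absurd (hkeyinj h) hwj
        · exact h
      have h1 : c j ≤ c (σ.symm w) := by
        apply hmono
        rwa [Equiv.apply_symm_apply]
      have h2 : c i ≤ c j := hmono i j hlt
      intro hEq
      exact hne (le_antisymm h2 (hEq ▸ h1))
  unfold ssgUtil
  rw [hempty]
  simp

theorem stmt4 {V A : Type*} [Fintype V] [DecidableEq V]
    (G : SimpleGraph V) [DecidableRel G.Adj] (htree : G.IsTree)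
    {k : ℕ} (hk : 2 ≤ k) (c : A → Fin k) (hbij : Nonempty (A ≃ V)) :
    ∃ σ : A ≃ V, ssgLocalEquilibrium G c σ := by
  classical
  haveI : Nonempty V := htree.isConnected.nonempty
  obtain ⟨e0⟩ := hbij
  haveI : Fintype A := Fintype.ofEquiv V e0.symm
  set n := Fintype.card V with hn
  have hcard : Fintype.card A = n := Fintype.card_congr e0
  let r : V := Classical.arbitrary V
  let eV : V ≃ Fin n := Fintype.equivFinOfCardEq rfl
  let key : V → ℕ := fun v => n * G.dist r v + (eV v : ℕ)
  have hkeyinj : Function.Injective key := by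
    intro v w h
    have := aux_nat_eq (eV v).isLt h (eV w).isLt
    have h2 : eV v = eV w := Fin.ext this.2
    exact eV.injective h2
  have huniq : ∀ v w1 w2, G.Adj v w1 → G.Adj v w2 →
      key w1 < key v → key w2 < key v → w1 = w2 := by
    intro v w1 w2 h1 h2 hk1 hk2
    have hd1 : G.dist r w1 ≤ G.dist r v := aux_nat_le (eV w1).isLt (le_of_lt hk1) (eV v).isLt
    have hd2 : G.dist r w2 ≤ G.dist r v := aux_nat_le (eV w2).isLt (le_of_lt hk2) (eV v).isLt
    have hne1 : G.dist r w1 ≠ G.dist r v := aux_dist_ne htree h1.symm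
    have hne2 : G.dist r w2 ≠ G.dist r v := aux_dist_ne htree h2.symm
    exact aux_parent_unique htree h1 h2 (lt_of_le_of_ne hd1 hne1) (lt_of_le_of_ne hd2 hne2)
  -- sorted enumeration of V by key
  let gV : Fin n → ℕ := fun m => key (eV.symm m)
  let τV := Tuple.sort gV
  let ordV : Fin n ≃ V := (τV : Fin n ≃ Fin n).trans eV.symm
  have hordV : ∀ m, key (ordV m) = gV (τV m) := fun m => rfl
  have hVmono : Monotone fun m => key (ordV m) := Tuple.monotone_sort gV
  -- sorted enumeration of A by color
  let eA : A ≃ Fin n := Fintype.equivFinOfCardEq hcard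
  let f : Fin n → Fin k := fun m => c (eA.symm m)
  let τA := Tuple.sort f
  let indexA : A ≃ Fin n := eA.trans (τA : Fin n ≃ Fin n).symm
  have hAmono : Monotone fun m => c (indexA.symm m) := by
    have h1 : ∀ m, c (indexA.symm m) = f (τA m) := fun m => rfl
    exact Tuple.monotone_sort f
  let σ : A ≃ V := indexA.trans ordV
  have hmono : ∀ a b, key (σ a) < key (σ b) → c a ≤ c b := by
    intro a b hab
    have hidx : indexA a < indexA b := by
      by_contra h
      exact absurd (hVmono (not_lt.mp h)) (not_le.mpr hab)
    have := hAmono (le_of_lt hidx)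
    simpa using this
  refine ⟨σ, ?_⟩
  intro i j hadj ⟨hne, hi, hj⟩
  rcases lt_trichotomy (key (σ i)) (key (σ j)) with h | h | h
  · rw [aux_no_improve G c σ key hkeyinj huniq hmono i j hadj hne h] at hi
    exact absurd hi (not_lt.mpr (aux_util_nonneg G c σ i))
  · exact hadj.ne (hkeyinj h)
  · have hswap : ssgSwap σ j i = ssgSwap σ i j := by
      unfold ssgSwap; rw [Equiv.swap_comm]
    rw [← hswap,
      aux_no_improve G c σ key hkeyinj huniq hmono j i hadj.symm (Ne.symm hne) h] at hj
    exact absurd hj (not_lt.mpr (aux_util_nonneg G c σ j))
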